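/- Fix an integer k ≥ 1 and let P = (P₁,P₂,P₃) : ℝ³ → ℝ³ be a vector field whose components are real polynomials of total degree ≤ k−1. Define v : Ω∞° → ℝ³ (the pullback φ*P of the 2-form P) by v(x,y,z) = (1+z)^{−3}·( P₁(φ(x,y,z)) + x·P₃(φ(x,y,z)), P₂(φ(x,y,z)) + y·P₃(φ(x,y,z)), (1+z)·P₃(φ(x,y,z)) ). Then v belongs to Q^{k,k−1,k−1}_{k+2} × Q^{k−1,k,k−1}_{k+2} × Q^{k−1,k−1,k}_{k+2}, and div v belongs to Q^{k−1,k−1,k−1}_{k+3} on Ω∞°. (This is the membership underlying the inclusion P^{k−1} ⊂ U^{(2),k}(Ω) for the H(div)-conforming pyramidal element.) -/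

import Mathlib

noncomputable section

/-- The interior `Ω∞° = (0,1) × (0,1) × (0,∞)` of the infinite pyramid. -/
def PyrInfInt : Set (ℝ × ℝ × ℝ) :=
  {p | 0 < p.1 ∧ p.1 < 1 ∧ 0 < p.2.1 ∧ p.2.1 < 1 ∧ 0 < p.2.2}

/-- The projective map `φ(x,y,z) = (x/(1+z), y/(1+z), z/(1+z))`. -/
def phi : ℝ × ℝ × ℝ → ℝ × ℝ × ℝ :=
  fun p => (p.1 / (1 + p.2.2), p.2.1 / (1 + p.2.2), p.2.2 / (1 + p.2.2))

/-- The weighted monomial `x^a y^b z^c / (1+z)^k`. -/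
def qmon (k a b c : ℕ) : ℝ × ℝ × ℝ → ℝ :=
  fun p => p.1 ^ a * p.2.1 ^ b * p.2.2 ^ c / (1 + p.2.2) ^ k

/-- The space `Q^{l,m,n}_k`. -/
def Qsp (l m n : ℤ) (k : ℕ) : Submodule ℝ ((ℝ × ℝ × ℝ) → ℝ) :=
  Submodule.span ℝ
    {f | ∃ a b c : ℕ, (a : ℤ) ≤ l ∧ (b : ℤ) ≤ m ∧ (c : ℤ) ≤ n ∧ f = qmon k a b c}

/-- Evaluation of a three-variable polynomial at `φ(x,y,z)`. -/
def evalPhi (P : MvPolynomial (Fin 3) ℝ) (p : ℝ × ℝ × ℝ) : ℝ :=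
  MvPolynomial.eval ![(phi p).1, (phi p).2.1, (phi p).2.2] P

/-- Partial derivative in `x`. -/
def pdx (f : ℝ × ℝ × ℝ → ℝ) (p : ℝ × ℝ × ℝ) : ℝ := fderiv ℝ f p ((1 : ℝ), (0 : ℝ), (0 : ℝ))

/-- Partial derivative in `y`. -/
def pdy (f : ℝ × ℝ × ℝ → ℝ) (p : ℝ × ℝ × ℝ) : ℝ := fderiv ℝ f p ((0 : ℝ), (1 : ℝ), (0 : ℝ))

/-- Partial derivative in `z`. -/
def pdz (f : ℝ × ℝ × ℝ → ℝ) (p : ℝ × ℝ × ℝ) : ℝ := fderiv ℝ f p ((0 : ℝ), (0 : ℝ), (1 : ℝ))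

open MvPolynomial

namespace PyrAux

abbrev V3 := ℝ × ℝ × ℝ

def toVec (p : V3) : Fin 3 → ℝ := ![p.1, p.2.1, p.2.2]

def evC (Q : MvPolynomial (Fin 3) ℝ) (p : V3) : ℝ := MvPolynomial.eval (toVec p) Q

lemma sum3 (s : Fin 3 →₀ ℕ) (f : ℕ → ℕ) (hf : f 0 = 0) :
    (s.sum fun _ e => f e) = f (s 0) + f (s 1) + f (s 2) := by
  rw [Finsupp.sum_fintype _ _ (fun _ => hf), Fin.sum_univ_three]

lemma td_pderiv (i : Fin 3) (P : MvPolynomial (Fin 3) ℝ) :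
    (pderiv i P).totalDegree ≤ P.totalDegree := by
  conv_lhs => rw [P.as_sum]
  rw [map_sum]
  refine (totalDegree_finset_sum _ _).trans (Finset.sup_le fun s hs => ?_)
  rw [pderiv_monomial]
  refine (totalDegree_monomial_le _ _).trans (le_trans ?_ (le_totalDegree hs))
  show ((s - Finsupp.single i 1).sum fun _ e => e) ≤ s.sum fun _ e => e
  rw [sum3 _ _ rfl, sum3 _ _ rfl, Finsupp.tsub_apply, Finsupp.tsub_apply, Finsupp.tsub_apply]
  omega

/-- projective lift -/
def tilde (d : ℕ) (P : MvPolynomial (Fin 3) ℝ) : MvPolynomial (Fin 3) ℝ :=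
  ∑ s ∈ P.support,
    MvPolynomial.C (MvPolynomial.coeff s P) * X 0 ^ s 0 * X 1 ^ s 1 * X 2 ^ s 2
      * (1 + X 2) ^ (d - (s 0 + s 1 + s 2))

lemma degreeOf_term (i : Fin 3) (c : ℝ) (a0 a1 a2 e : ℕ) :
    degreeOf i (MvPolynomial.C c * X 0 ^ a0 * X 1 ^ a1 * X 2 ^ a2
        * ((1 : MvPolynomial (Fin 3) ℝ) + X 2) ^ e)
      ≤ ![a0, a1, a2] i + (if i = 2 then e else 0) := by
  have dC : degreeOf i (MvPolynomial.C c : MvPolynomial (Fin 3) ℝ) = 0 := degreeOf_C _ _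
  have d0 := degreeOf_pow_le i (X 0 : MvPolynomial (Fin 3) ℝ) a0
  have d1 := degreeOf_pow_le i (X 1 : MvPolynomial (Fin 3) ℝ) a1
  have d2 := degreeOf_pow_le i (X 2 : MvPolynomial (Fin 3) ℝ) a2
  have de : degreeOf i (((1 : MvPolynomial (Fin 3) ℝ) + X 2) ^ e) ≤ e * (if i = 2 then 1 else 0) := by
    refine (degreeOf_pow_le _ _ _).trans (Nat.mul_le_mul_left _ ?_)
    refine (degreeOf_add_le _ _ _).trans ?_
    have d1' : degreeOf i (1 : MvPolynomial (Fin 3) ℝ) = 0 := degreeOf_C 1 i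
    rw [d1', degreeOf_X]
    simp
  have m1 := degreeOf_mul_le i (MvPolynomial.C c * X 0 ^ a0 * X 1 ^ a1 * X 2 ^ a2)
    (((1 : MvPolynomial (Fin 3) ℝ) + X 2) ^ e)
  have m2 := degreeOf_mul_le i (MvPolynomial.C c * X 0 ^ a0 * X 1 ^ a1)
    ((X 2 : MvPolynomial (Fin 3) ℝ) ^ a2)
  have m3 := degreeOf_mul_le i (MvPolynomial.C c * X 0 ^ a0) ((X 1 : MvPolynomial (Fin 3) ℝ) ^ a1)
  have m4 := degreeOf_mul_le i (MvPolynomial.C c) ((X 0 : MvPolynomial (Fin 3) ℝ) ^ a0)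
  fin_cases i <;>
    simp only [degreeOf_X, Matrix.cons_val_zero, Matrix.cons_val_one, Matrix.head_cons,
      Fin.mk_zero, Fin.mk_one, dC, if_true, if_false] at * <;>
  · simp_all
    omega

lemma degreeOf_tilde_le (d : ℕ) (P : MvPolynomial (Fin 3) ℝ) (hP : P.totalDegree ≤ d) (i : Fin 3) :
    degreeOf i (tilde d P) ≤ d := by
  refine (degreeOf_sum_le _ _ _).trans (Finset.sup_le fun s hs => ?_)
  have hsd : s 0 + s 1 + s 2 ≤ d := by
    have := (le_totalDegree hs).trans hP
    rw [sum3 _ _ rfl] at this; omega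
  refine (degreeOf_term i _ (s 0) (s 1) (s 2) _).trans ?_
  fin_cases i <;> simp <;> omega

lemma eval_tilde (d : ℕ) (P : MvPolynomial (Fin 3) ℝ) (hP : P.totalDegree ≤ d) (p : V3)
    (h : 1 + p.2.2 ≠ 0) :
    evC (tilde d P) p = (1 + p.2.2) ^ d * evalPhi P p := by
  have hep : evalPhi P p = eval (toVec (phi p)) P := rfl
  rw [hep, eval_eq' (toVec (phi p)) P]
  unfold evC tilde
  rw [map_sum, Finset.mul_sum]
  refine Finset.sum_congr rfl fun s hs => ?_
  have hsd : s 0 + s 1 + s 2 ≤ d := by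
    have := (le_totalDegree hs).trans hP
    rw [sum3 _ _ rfl] at this; omega
  obtain ⟨e, rfl⟩ : ∃ e, d = s 0 + s 1 + s 2 + e := ⟨d - (s 0 + s 1 + s 2), by omega⟩
  have he : s 0 + s 1 + s 2 + e - (s 0 + s 1 + s 2) = e := by omega
  rw [he]
  simp only [map_mul, map_pow, map_add, map_one, eval_C, eval_X, Fin.prod_univ_three]
  unfold toVec phi
  simp only [Matrix.cons_val_zero, Matrix.cons_val_one, Matrix.head_cons, Matrix.cons_val_two,
    Matrix.tail_cons]
  rw [div_pow, div_pow, div_pow]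
  field_simp
  ring

lemma mem_Qsp_of (Q : MvPolynomial (Fin 3) ℝ) (K : ℕ) (l m n : ℤ)
    (h0 : (degreeOf 0 Q : ℤ) ≤ l) (h1 : (degreeOf 1 Q : ℤ) ≤ m) (h2 : (degreeOf 2 Q : ℤ) ≤ n) :
    (fun p : V3 => evC Q p / (1 + p.2.2) ^ K) ∈ Qsp l m n K := by
  have key : (fun p : V3 => evC Q p / (1 + p.2.2) ^ K)
      = ∑ s ∈ Q.support, MvPolynomial.coeff s Q • qmon K (s 0) (s 1) (s 2) := by
    funext p
    rw [Finset.sum_apply]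
    unfold evC qmon
    rw [eval_eq', Finset.sum_div]
    refine Finset.sum_congr rfl fun s _ => ?_
    unfold toVec
    simp only [Fin.prod_univ_three, Matrix.cons_val_zero, Matrix.cons_val_one, Matrix.head_cons,
      Matrix.cons_val_two, Matrix.tail_cons, Pi.smul_apply, smul_eq_mul]
    ring
  rw [key]
  refine Submodule.sum_mem _ fun s hs => Submodule.smul_mem _ _ (Submodule.subset_span ?_)
  refine ⟨s 0, s 1, s 2, ?_, ?_, ?_, rfl⟩
  · exact le_trans (by exact_mod_cast monomial_le_degreeOf 0 hs) h0
  · exact le_trans (by exact_mod_cast monomial_le_degreeOf 1 hs) h1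
  · exact le_trans (by exact_mod_cast monomial_le_degreeOf 2 hs) h2

def Lx : V3 →L[ℝ] ℝ := ContinuousLinearMap.fst ℝ ℝ (ℝ × ℝ)
def Ly : V3 →L[ℝ] ℝ :=
  (ContinuousLinearMap.fst ℝ ℝ ℝ).comp (ContinuousLinearMap.snd ℝ ℝ (ℝ × ℝ))
def Lz : V3 →L[ℝ] ℝ :=
  (ContinuousLinearMap.snd ℝ ℝ ℝ).comp (ContinuousLinearMap.snd ℝ ℝ (ℝ × ℝ))

def Ld (Q : MvPolynomial (Fin 3) ℝ) (p : V3) : V3 →L[ℝ] ℝ :=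
  evC (pderiv 0 Q) p • Lx + evC (pderiv 1 Q) p • Ly + evC (pderiv 2 Q) p • Lz

lemma hasFDerivAt_x (p : V3) : HasFDerivAt (fun q : V3 => q.1) Lx p := hasFDerivAt_fst

lemma hasFDerivAt_y (p : V3) : HasFDerivAt (fun q : V3 => q.2.1) Ly p :=
  hasFDerivAt_fst.comp p hasFDerivAt_snd

lemma hasFDerivAt_z (p : V3) : HasFDerivAt (fun q : V3 => q.2.2) Lz p :=
  hasFDerivAt_snd.comp p hasFDerivAt_snd

lemma evC_add (P Q : MvPolynomial (Fin 3) ℝ) (p : V3) : evC (P + Q) p = evC P p + evC Q p := by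
  simp [evC]

lemma evC_mul (P Q : MvPolynomial (Fin 3) ℝ) (p : V3) : evC (P * Q) p = evC P p * evC Q p := by
  simp [evC]

lemma Ld_mul_X0 (P : MvPolynomial (Fin 3) ℝ) (p : V3) :
    Ld (P * X 0) p = evC P p • Lx + p.1 • Ld P p := by
  have e0 : pderiv (0 : Fin 3) (P * X 0) = pderiv 0 P * X 0 + P := by
    rw [pderiv_mul, pderiv_X_self, mul_one]
  have e1 : pderiv (1 : Fin 3) (P * X 0) = pderiv 1 P * X 0 := by
    rw [pderiv_mul, pderiv_X_of_ne (by decide), mul_zero, add_zero]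
  have e2 : pderiv (2 : Fin 3) (P * X 0) = pderiv 2 P * X 0 := by
    rw [pderiv_mul, pderiv_X_of_ne (by decide), mul_zero, add_zero]
  have hx : evC (X 0) p = p.1 := by simp [evC, toVec]
  simp only [Ld, e0, e1, e2, evC_add, evC_mul, hx]
  module

lemma Ld_mul_X1 (P : MvPolynomial (Fin 3) ℝ) (p : V3) :
    Ld (P * X 1) p = evC P p • Ly + p.2.1 • Ld P p := by
  have e0 : pderiv (0 : Fin 3) (P * X 1) = pderiv 0 P * X 1 := by
    rw [pderiv_mul, pderiv_X_of_ne (by decide), mul_zero, add_zero]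
  have e1 : pderiv (1 : Fin 3) (P * X 1) = pderiv 1 P * X 1 + P := by
    rw [pderiv_mul, pderiv_X_self, mul_one]
  have e2 : pderiv (2 : Fin 3) (P * X 1) = pderiv 2 P * X 1 := by
    rw [pderiv_mul, pderiv_X_of_ne (by decide), mul_zero, add_zero]
  have hx : evC (X 1) p = p.2.1 := by simp [evC, toVec]
  simp only [Ld, e0, e1, e2, evC_add, evC_mul, hx]
  module

lemma Ld_mul_X2 (P : MvPolynomial (Fin 3) ℝ) (p : V3) :
    Ld (P * X 2) p = evC P p • Lz + p.2.2 • Ld P p := by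
  have e0 : pderiv (0 : Fin 3) (P * X 2) = pderiv 0 P * X 2 := by
    rw [pderiv_mul, pderiv_X_of_ne (by decide), mul_zero, add_zero]
  have e1 : pderiv (1 : Fin 3) (P * X 2) = pderiv 1 P * X 2 := by
    rw [pderiv_mul, pderiv_X_of_ne (by decide), mul_zero, add_zero]
  have e2 : pderiv (2 : Fin 3) (P * X 2) = pderiv 2 P * X 2 + P := by
    rw [pderiv_mul, pderiv_X_self, mul_one]
  have hx : evC (X 2) p = p.2.2 := by simp [evC, toVec]
  simp only [Ld, e0, e1, e2, evC_add, evC_mul, hx]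
  module

lemma hasFDerivAt_evC (Q : MvPolynomial (Fin 3) ℝ) (p : V3) :
    HasFDerivAt (evC Q) (Ld Q p) p := by
  induction Q using MvPolynomial.induction_on with
  | C a =>
    have h1 : evC (MvPolynomial.C a) = fun _ : V3 => a := funext fun q => by simp [evC]
    have h2 : Ld (MvPolynomial.C a) p = 0 := by
      simp [Ld, evC, pderiv_C]
    rw [h1, h2]
    exact hasFDerivAt_const a p
  | add P Q hP hQ =>
    have h1 : evC (P + Q) = fun q => evC P q + evC Q q := funext fun q => by simp [evC]
    have h2 : Ld (P + Q) p = Ld P p + Ld Q p := by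
      simp only [Ld, evC, map_add]
      module
    rw [h1, h2]
    exact hP.add hQ
  | mul_X P i hP =>
    have h1 : evC (P * X i) = fun q => evC P q * toVec q i := funext fun q => by
      simp [evC, toVec]
    rw [h1]
    fin_cases i
    · show HasFDerivAt (fun q => evC P q * toVec q (0 : Fin 3)) (Ld (P * X (0 : Fin 3)) p) p
      have hfun : (fun q : V3 => evC P q * toVec q (0 : Fin 3)) = fun q => evC P q * q.1 := by
        funext q; simp [toVec]
      rw [hfun, Ld_mul_X0]
      have h2 := hP.mul (hasFDerivAt_x p)
      have : toVec p (0 : Fin 3) = p.1 := by simp [toVec]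
      exact h2
    · show HasFDerivAt (fun q => evC P q * toVec q (1 : Fin 3)) (Ld (P * X (1 : Fin 3)) p) p
      have hfun : (fun q : V3 => evC P q * toVec q (1 : Fin 3)) = fun q => evC P q * q.2.1 := by
        funext q; simp [toVec]
      rw [hfun, Ld_mul_X1]
      exact hP.mul (hasFDerivAt_y p)
    · show HasFDerivAt (fun q => evC P q * toVec q (2 : Fin 3)) (Ld (P * X (2 : Fin 3)) p) p
      have hfun : (fun q : V3 => evC P q * toVec q (2 : Fin 3)) = fun q => evC P q * q.2.2 := by
        funext q; simp [toVec]
      rw [hfun, Ld_mul_X2]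
      exact hP.mul (hasFDerivAt_z p)

lemma pd_sum (P₁ P₂ P₃ : MvPolynomial (Fin 3) ℝ) (p : V3) (h : 1 + p.2.2 ≠ 0) :
    pdx (fun q => (evalPhi P₁ q + q.1 * evalPhi P₃ q) / (1 + q.2.2) ^ 3) p +
      pdy (fun q => (evalPhi P₂ q + q.2.1 * evalPhi P₃ q) / (1 + q.2.2) ^ 3) p +
      pdz (fun q => ((1 + q.2.2) * evalPhi P₃ q) / (1 + q.2.2) ^ 3) p
    = (evC (pderiv 0 P₁) (phi p) + evC (pderiv 1 P₂) (phi p) + evC (pderiv 2 P₃) (phi p))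
        / (1 + p.2.2) ^ 4 := by
  have hden : HasFDerivAt (fun q : V3 => 1 + q.2.2) Lz p := (hasFDerivAt_z p).const_add 1
  have hinv : HasFDerivAt (fun q : V3 => (1 + q.2.2)⁻¹)
      ((-((1 + p.2.2) ^ 2)⁻¹) • Lz) p :=
    (hasDerivAt_inv h).comp_hasFDerivAt p hden
  have hinv3' := HasDerivAt.comp_hasFDerivAt p
    ((hasDerivAt_pow 3 (1 + p.2.2)).inv (pow_ne_zero 3 h)) hden
  have hinv3 : HasFDerivAt (fun q : V3 => ((1 + q.2.2) ^ 3)⁻¹)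
      ((-((3 : ℝ) * (1 + p.2.2) ^ (3 - 1)) / ((1 + p.2.2) ^ 3) ^ 2) • Lz) p := by
    exact hinv3' 
  have ha := (hasFDerivAt_x p).mul hinv
  have hb := (hasFDerivAt_y p).mul hinv
  have hc := (hasFDerivAt_z p).mul hinv
  have hfun : phi = fun q : V3 =>
      (q.1 * (1 + q.2.2)⁻¹, q.2.1 * (1 + q.2.2)⁻¹, q.2.2 * (1 + q.2.2)⁻¹) := by
    funext q; simp [phi, div_eq_mul_inv]
  have hphi : HasFDerivAt (fun q : V3 =>
      (q.1 * (1 + q.2.2)⁻¹, q.2.1 * (1 + q.2.2)⁻¹, q.2.2 * (1 + q.2.2)⁻¹)) _ p :=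
    ha.prodMk (hb.prodMk hc)
  rw [← hfun] at hphi
  have hA1 := (hasFDerivAt_evC P₁ (phi p)).comp p hphi
  have hA2 := (hasFDerivAt_evC P₂ (phi p)).comp p hphi
  have hA3 := (hasFDerivAt_evC P₃ (phi p)).comp p hphi
  have hfe₁ : (fun q : V3 => (evalPhi P₁ q + q.1 * evalPhi P₃ q) / (1 + q.2.2) ^ 3)
      = fun q : V3 => ((evC P₁ ∘ phi) q + q.1 * (evC P₃ ∘ phi) q) * ((1 + q.2.2) ^ 3)⁻¹ := by
    funext q; rw [div_eq_mul_inv]; rfl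
  have hfe₂ : (fun q : V3 => (evalPhi P₂ q + q.2.1 * evalPhi P₃ q) / (1 + q.2.2) ^ 3)
      = fun q : V3 => ((evC P₂ ∘ phi) q + q.2.1 * (evC P₃ ∘ phi) q) * ((1 + q.2.2) ^ 3)⁻¹ := by
    funext q; rw [div_eq_mul_inv]; rfl
  have hfe₃ : (fun q : V3 => ((1 + q.2.2) * evalPhi P₃ q) / (1 + q.2.2) ^ 3)
      = fun q : V3 => ((1 + q.2.2) * (evC P₃ ∘ phi) q) * ((1 + q.2.2) ^ 3)⁻¹ := by
    funext q; rw [div_eq_mul_inv]; rfl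
  have hf₁ : HasFDerivAt (fun q : V3 => ((evC P₁ ∘ phi) q + q.1 * (evC P₃ ∘ phi) q) * ((1 + q.2.2) ^ 3)⁻¹) _ p :=
    (hA1.add ((hasFDerivAt_x p).mul hA3)).mul hinv3
  have hf₂ : HasFDerivAt (fun q : V3 => ((evC P₂ ∘ phi) q + q.2.1 * (evC P₃ ∘ phi) q) * ((1 + q.2.2) ^ 3)⁻¹) _ p :=
    (hA2.add ((hasFDerivAt_y p).mul hA3)).mul hinv3
  have hf₃ : HasFDerivAt (fun q : V3 => ((1 + q.2.2) * (evC P₃ ∘ phi) q) * ((1 + q.2.2) ^ 3)⁻¹) _ p :=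
    (hden.mul hA3).mul hinv3
  rw [← hfe₁] at hf₁
  rw [← hfe₂] at hf₂
  rw [← hfe₃] at hf₃
  simp only [pdx, pdy, pdz]
  rw [hf₁.fderiv, hf₂.fderiv, hf₃.fderiv]
  simp only [ContinuousLinearMap.add_apply, ContinuousLinearMap.smul_apply,
    ContinuousLinearMap.comp_apply, ContinuousLinearMap.prod_apply, Ld, Lx, Ly, Lz,
    ContinuousLinearMap.coe_fst', ContinuousLinearMap.coe_snd', smul_eq_mul,
    ContinuousLinearMap.coe_comp', Function.comp_apply]
  norm_num
  field_simp
  ring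

end PyrAux

/-- for a polynomial vector field `P = (P₁,P₂,P₃)` of total degree `≤ k−1`,
the 2-form pullback `v = (1+z)^{−3}·(P₁∘φ + x·P₃∘φ, P₂∘φ + y·P₃∘φ, (1+z)·P₃∘φ)` belongs
componentwise to `Q^{k,k−1,k−1}_{k+2} × Q^{k−1,k,k−1}_{k+2} × Q^{k−1,k−1,k}_{k+2}` on
`Ω∞°`, and `div v` belongs to `Q^{k−1,k−1,k−1}_{k+3}` on `Ω∞°`. -/
theorem pullback_two_form_of_polynomial (k : ℕ) (hk : 1 ≤ k)
    (P₁ P₂ P₃ : MvPolynomial (Fin 3) ℝ)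
    (h₁ : P₁.totalDegree ≤ k - 1) (h₂ : P₂.totalDegree ≤ k - 1)
    (h₃ : P₃.totalDegree ≤ k - 1) :
    ∃ w₁ ∈ Qsp k ((k : ℤ) - 1) ((k : ℤ) - 1) (k + 2),
    ∃ w₂ ∈ Qsp ((k : ℤ) - 1) k ((k : ℤ) - 1) (k + 2),
    ∃ w₃ ∈ Qsp ((k : ℤ) - 1) ((k : ℤ) - 1) k (k + 2),
    ∃ wd ∈ Qsp ((k : ℤ) - 1) ((k : ℤ) - 1) ((k : ℤ) - 1) (k + 3),
      ∀ p ∈ PyrInfInt,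
        (evalPhi P₁ p + p.1 * evalPhi P₃ p) / (1 + p.2.2) ^ 3 = w₁ p ∧
        (evalPhi P₂ p + p.2.1 * evalPhi P₃ p) / (1 + p.2.2) ^ 3 = w₂ p ∧
        ((1 + p.2.2) * evalPhi P₃ p) / (1 + p.2.2) ^ 3 = w₃ p ∧
        pdx (fun q => (evalPhi P₁ q + q.1 * evalPhi P₃ q) / (1 + q.2.2) ^ 3) p +
          pdy (fun q => (evalPhi P₂ q + q.2.1 * evalPhi P₃ q) / (1 + q.2.2) ^ 3) p +
          pdz (fun q => ((1 + q.2.2) * evalPhi P₃ q) / (1 + q.2.2) ^ 3) p = wd p := by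
  classical
  open PyrAux in
  -- notation
  have hd3 : k + 2 = (k - 1) + 3 := by omega
  have hd4 : k + 3 = (k - 1) + 4 := by omega
  set T₁ := PyrAux.tilde (k - 1) P₁ with hT₁
  set T₂ := PyrAux.tilde (k - 1) P₂ with hT₂
  set T₃ := PyrAux.tilde (k - 1) P₃ with hT₃
  set N₁ := T₁ + MvPolynomial.X 0 * T₃ with hN₁
  set N₂ := T₂ + MvPolynomial.X 1 * T₃ with hN₂
  set N₃ := (1 + MvPolynomial.X 2) * T₃ with hN₃
  set Qd := MvPolynomial.pderiv (0 : Fin 3) P₁ + MvPolynomial.pderiv (1 : Fin 3) P₂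
    + MvPolynomial.pderiv (2 : Fin 3) P₃ with hQd
  have hQdd : Qd.totalDegree ≤ k - 1 := by
    refine (MvPolynomial.totalDegree_add _ _).trans (max_le ?_ ?_)
    · refine (MvPolynomial.totalDegree_add _ _).trans (max_le ?_ ?_)
      · exact (PyrAux.td_pderiv _ _).trans h₁
      · exact (PyrAux.td_pderiv _ _).trans h₂
    · exact (PyrAux.td_pderiv _ _).trans h₃
  set Nd := PyrAux.tilde (k - 1) Qd with hNd
  have hcast : ((k - 1 : ℕ) : ℤ) = (k : ℤ) - 1 := by omega
  have ht1 : ∀ i, MvPolynomial.degreeOf i T₁ ≤ k - 1 :=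
    fun i => PyrAux.degreeOf_tilde_le (k - 1) P₁ h₁ i
  have ht2 : ∀ i, MvPolynomial.degreeOf i T₂ ≤ k - 1 :=
    fun i => PyrAux.degreeOf_tilde_le (k - 1) P₂ h₂ i
  have ht3 : ∀ i, MvPolynomial.degreeOf i T₃ ≤ k - 1 :=
    fun i => PyrAux.degreeOf_tilde_le (k - 1) P₃ h₃ i
  have htd : ∀ i, MvPolynomial.degreeOf i Nd ≤ k - 1 :=
    fun i => PyrAux.degreeOf_tilde_le (k - 1) Qd hQdd i
  have hX : ∀ i j : Fin 3, MvPolynomial.degreeOf i (MvPolynomial.X j : MvPolynomial (Fin 3) ℝ)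
      = if i = j then 1 else 0 := fun i j => MvPolynomial.degreeOf_X i j
  have hE : ∀ i : Fin 3, MvPolynomial.degreeOf i ((1 + MvPolynomial.X 2 : MvPolynomial (Fin 3) ℝ))
      ≤ if i = 2 then 1 else 0 := by
    intro i
    refine (MvPolynomial.degreeOf_add_le _ _ _).trans (max_le ?_ ?_)
    · rw [show (1 : MvPolynomial (Fin 3) ℝ) = MvPolynomial.C 1 from (map_one _).symm,
        MvPolynomial.degreeOf_C]
      exact Nat.zero_le _
    · rw [hX i 2]
  have hb10 : MvPolynomial.degreeOf (0 : Fin 3) N₁ ≤ k := by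
    refine (MvPolynomial.degreeOf_add_le _ _ _).trans (max_le ((ht1 0).trans (by omega)) ?_)
    refine (MvPolynomial.degreeOf_mul_le _ _ _).trans ?_
    rw [hX 0 0]; have := ht3 0; simp; omega
  have hb11 : MvPolynomial.degreeOf (1 : Fin 3) N₁ ≤ k - 1 := by
    refine (MvPolynomial.degreeOf_add_le _ _ _).trans (max_le (ht1 1) ?_)
    refine (MvPolynomial.degreeOf_mul_le _ _ _).trans ?_
    rw [hX 1 0]; have := ht3 1; simp; omega
  have hb12 : MvPolynomial.degreeOf (2 : Fin 3) N₁ ≤ k - 1 := by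
    refine (MvPolynomial.degreeOf_add_le _ _ _).trans (max_le (ht1 2) ?_)
    refine (MvPolynomial.degreeOf_mul_le _ _ _).trans ?_
    rw [hX 2 0]; have := ht3 2; simp; omega
  have hb20 : MvPolynomial.degreeOf (0 : Fin 3) N₂ ≤ k - 1 := by
    refine (MvPolynomial.degreeOf_add_le _ _ _).trans (max_le (ht2 0) ?_)
    refine (MvPolynomial.degreeOf_mul_le _ _ _).trans ?_
    rw [hX 0 1]; have := ht3 0; simp; omega
  have hb21 : MvPolynomial.degreeOf (1 : Fin 3) N₂ ≤ k := by
    refine (MvPolynomial.degreeOf_add_le _ _ _).trans (max_le ((ht2 1).trans (by omega)) ?_)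
    refine (MvPolynomial.degreeOf_mul_le _ _ _).trans ?_
    rw [hX 1 1]; have := ht3 1; simp; omega
  have hb22 : MvPolynomial.degreeOf (2 : Fin 3) N₂ ≤ k - 1 := by
    refine (MvPolynomial.degreeOf_add_le _ _ _).trans (max_le (ht2 2) ?_)
    refine (MvPolynomial.degreeOf_mul_le _ _ _).trans ?_
    rw [hX 2 1]; have := ht3 2; simp; omega
  have hb30 : MvPolynomial.degreeOf (0 : Fin 3) N₃ ≤ k - 1 := by
    refine (MvPolynomial.degreeOf_mul_le _ _ _).trans ?_
    have h1 := hE 0; have h2 := ht3 0; simp at h1; omega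
  have hb31 : MvPolynomial.degreeOf (1 : Fin 3) N₃ ≤ k - 1 := by
    refine (MvPolynomial.degreeOf_mul_le _ _ _).trans ?_
    have h1 := hE 1; have h2 := ht3 1; simp at h1; omega
  have hb32 : MvPolynomial.degreeOf (2 : Fin 3) N₃ ≤ k := by
    refine (MvPolynomial.degreeOf_mul_le _ _ _).trans ?_
    have h1 := hE 2; have h2 := ht3 2; simp at h1; omega
  refine ⟨fun p => PyrAux.evC N₁ p / (1 + p.2.2) ^ (k + 2), ?_,
    fun p => PyrAux.evC N₂ p / (1 + p.2.2) ^ (k + 2), ?_,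
    fun p => PyrAux.evC N₃ p / (1 + p.2.2) ^ (k + 2), ?_,
    fun p => PyrAux.evC Nd p / (1 + p.2.2) ^ (k + 3), ?_, ?_⟩
  · refine PyrAux.mem_Qsp_of N₁ (k + 2) _ _ _ ?_ ?_ ?_
    · exact_mod_cast hb10
    · rw [← hcast]; exact_mod_cast hb11
    · rw [← hcast]; exact_mod_cast hb12
  · refine PyrAux.mem_Qsp_of N₂ (k + 2) _ _ _ ?_ ?_ ?_
    · rw [← hcast]; exact_mod_cast hb20
    · exact_mod_cast hb21
    · rw [← hcast]; exact_mod_cast hb22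
  · refine PyrAux.mem_Qsp_of N₃ (k + 2) _ _ _ ?_ ?_ ?_
    · rw [← hcast]; exact_mod_cast hb30
    · rw [← hcast]; exact_mod_cast hb31
    · exact_mod_cast hb32
  · refine PyrAux.mem_Qsp_of Nd (k + 3) _ _ _ ?_ ?_ ?_
    · rw [← hcast]; exact_mod_cast htd 0
    · rw [← hcast]; exact_mod_cast htd 1
    · rw [← hcast]; exact_mod_cast htd 2
  -- pointwise identities
  intro p hp
  have hzpos : 0 < p.2.2 := hp.2.2.2.2
  have hne : 1 + p.2.2 ≠ 0 := by positivity
  have hne' : (1 + p.2.2) ^ (k - 1) ≠ 0 := pow_ne_zero _ hne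
  have e₁ : PyrAux.evC T₁ p = (1 + p.2.2) ^ (k - 1) * evalPhi P₁ p :=
    PyrAux.eval_tilde _ _ h₁ p hne
  have e₂ : PyrAux.evC T₂ p = (1 + p.2.2) ^ (k - 1) * evalPhi P₂ p :=
    PyrAux.eval_tilde _ _ h₂ p hne
  have e₃ : PyrAux.evC T₃ p = (1 + p.2.2) ^ (k - 1) * evalPhi P₃ p :=
    PyrAux.eval_tilde _ _ h₃ p hne
  have ed : PyrAux.evC Nd p = (1 + p.2.2) ^ (k - 1) * evalPhi Qd p :=
    PyrAux.eval_tilde _ _ hQdd p hne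
  have hx0 : PyrAux.evC (MvPolynomial.X 0) p = p.1 := by simp [PyrAux.evC, PyrAux.toVec]
  have hx1 : PyrAux.evC (MvPolynomial.X 1) p = p.2.1 := by simp [PyrAux.evC, PyrAux.toVec]
  have hone : PyrAux.evC (1 + MvPolynomial.X 2) p = 1 + p.2.2 := by
    simp [PyrAux.evC, PyrAux.toVec]
  refine ⟨?_, ?_, ?_, ?_⟩
  · beta_reduce
    rw [PyrAux.evC_add, PyrAux.evC_mul, hx0, e₁, e₃, hd3, pow_add]
    field_simp
  · beta_reduce
    rw [PyrAux.evC_add, PyrAux.evC_mul, hx1, e₂, e₃, hd3, pow_add]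
    field_simp
  · beta_reduce
    rw [PyrAux.evC_mul, hone, e₃, hd3, pow_add]
    field_simp
  · beta_reduce
    rw [PyrAux.pd_sum P₁ P₂ P₃ p hne, ed, hd4, pow_add]
    have hev : evalPhi Qd p = PyrAux.evC (MvPolynomial.pderiv (0 : Fin 3) P₁) (phi p)
        + PyrAux.evC (MvPolynomial.pderiv (1 : Fin 3) P₂) (phi p)
        + PyrAux.evC (MvPolynomial.pderiv (2 : Fin 3) P₃) (phi p) := by
      rw [hQd]
      show PyrAux.evC _ (phi p) = _
      rw [PyrAux.evC_add, PyrAux.evC_add]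
    rw [hev]
    field_simp


end
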